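/- Lemma E.5: Consider the recursively defined kernels with identity skip connection: K^(0)_{ij} given, b^(0)_i = 0, and for h ≥ 1, with (u,v) ∼ N(0, [[K^(h−1)_{ii}, K^(h−1)_{ij}],[K^(h−1)_{ji}, K^(h−1)_{jj}]]): K^(h)_{ij} = K^(h−1)_{ij} + E[ρ^(h)(u) b^(h−1)_j + b^(h−1)_i ρ^(h)(v) + ρ^(h)(u) ρ^(h)(v)] and b^(h)_i = b^(h−1)_i + E[ρ^(h)(u)], where each ρ^(h): ℝ → ℝ is Lipschitz (so all expectations are finite) and the 2×2 covariance matrices above are positive semidefinite at every level (which holds inductively). Then for every H, min_{i,j} λ_min([[K^(H)_{ii}, K^(H)_{ij}],[K^(H)_{ji}, K^(H)_{jj}]]) ≥ min_{i,j} λ_min([[K^(0)_{ii}, K^(0)_{ij}],[K^(0)_{ji}, K^(0)_{jj}]]). -/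

import Mathlib

open MeasureTheory ProbabilityTheory Matrix
open scoped NNReal

noncomputable section

/-- Euclidean (`ℓ²`) norm of a finitely indexed real vector. -/
def l2norm {ι : Type*} [Fintype ι] (v : ι → ℝ) : ℝ :=
  Real.sqrt (∑ i, v i ^ 2)

/-- Frobenius norm of a matrix. -/
def frobNorm {ι κ : Type*} [Fintype ι] [Fintype κ] (M : Matrix ι κ ℝ) : ℝ :=
  Real.sqrt (∑ i, ∑ j, M i j ^ 2)

/-- Operator (spectral) norm of a matrix. -/
def opNorm {ι κ : Type*} [Fintype ι] [Fintype κ] (M : Matrix ι κ ℝ) : ℝ :=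
  sSup {r | ∃ v : κ → ℝ, (∑ j, v j ^ 2) ≤ 1 ∧ r = Real.sqrt (∑ i, (∑ j, M i j * v j) ^ 2)}

/-- Smallest eigenvalue of a (symmetric) matrix, as the infimum of the Rayleigh
quotient over the unit sphere. -/
def lambdaMin {ι : Type*} [Fintype ι] (M : Matrix ι ι ℝ) : ℝ :=
  sInf {r | ∃ v : ι → ℝ, (∑ i, v i ^ 2) = 1 ∧ r = ∑ i, ∑ j, v i * M i j * v j}

/-- The standard Gaussian measure on `ι → ℝ`. -/
def stdGaussianPi (ι : Type*) [Fintype ι] : Measure (ι → ℝ) :=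
  Measure.pi fun _ => gaussianReal 0 1

/-- PSD square root of a matrix (with junk value `0` off the PSD cone). -/
def matSqrt {ι : Type*} [Fintype ι] [DecidableEq ι] (A : Matrix ι ι ℝ) : Matrix ι ι ℝ :=
  open scoped Classical in
  if h : A.PosSemidef then
    (h.1.eigenvectorUnitary : Matrix ι ι ℝ) * diagonal (fun i => Real.sqrt (h.1.eigenvalues i)) *
      (star h.1.eigenvectorUnitary : Matrix ι ι ℝ)
  else 0

/-- Expectation of `f u` for `u ∼ N(0, A)` a centered Gaussian vector with covariance `A`. -/
def gaussExpVec {ι : Type*} [Fintype ι] [DecidableEq ι]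
    (A : Matrix ι ι ℝ) (f : (ι → ℝ) → ℝ) : ℝ :=
  ∫ z, f ((matSqrt A).mulVec z) ∂(stdGaussianPi ι)

/-- Expectation of `f u v` for `(u,v) ∼ N(0, A)`, `A` a `2 × 2` covariance matrix. -/
def gaussExp2 (A : Matrix (Fin 2) (Fin 2) ℝ) (f : ℝ → ℝ → ℝ) : ℝ :=
  gaussExpVec A fun z => f (z 0) (z 1)

/-- Expectation of `f u` for a centered scalar Gaussian `u` with variance `v`. -/
def gaussExp1 (v : ℝ) (f : ℝ → ℝ) : ℝ :=
  ∫ z, f (Real.sqrt v * z) ∂(gaussianReal 0 1)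

/-- The normalization constant `c_σ = (E_{z ∼ N(0,1)} σ(z)²)⁻¹`. -/
def cSig (σ : ℝ → ℝ) : ℝ :=
  (∫ z, (σ z) ^ 2 ∂(gaussianReal 0 1))⁻¹

/-- Condition 3.1: `σ` is Lipschitz and smooth (its derivative is Lipschitz),
with `|σ(0)|` bounded by the same constant. -/
def Condition31 (σ : ℝ → ℝ) : Prop :=
  Differentiable ℝ σ ∧
    ∃ c : ℝ≥0, 0 < c ∧ |σ 0| ≤ c ∧ LipschitzWith c σ ∧ LipschitzWith c (deriv σ)

/-- Condition 3.2: `σ` is analytic and is not a polynomial. -/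
def Condition32 (σ : ℝ → ℝ) : Prop :=
  (∀ x : ℝ, AnalyticAt ℝ σ x) ∧ ¬ ∃ P : Polynomial ℝ, ∀ x, σ x = P.eval x

/-- The `2 × 2` submatrix of `K` with rows/columns `i, j`. -/
def cov2 {n : ℕ} (K : Matrix (Fin n) (Fin n) ℝ) (i j : Fin n) : Matrix (Fin 2) (Fin 2) ℝ :=
  !![K i i, K i j; K j i, K j j]

/-- Geometric series `g_α(j) = ∑_{i=0}^{j-1} α^i`. -/
def gSeries (α : ℝ) (j : ℕ) : ℝ :=
  ∑ i ∈ Finset.range j, α ^ i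

/-- The data points are pairwise non-parallel: `x i ∉ span (x j)` for `i ≠ j`. -/
def Nonparallel {n d : ℕ} (x : Fin n → Fin d → ℝ) : Prop :=
  ∀ i j, i ≠ j → ∀ c : ℝ, x i ≠ c • x j

end
noncomputable section

/-- The recursively defined kernels `(K^(h), b^(h))` with identity skip connection
(ResNet architecture, scalar outputs): `K^(0)` given, `b^(0) = 0`, and for
`(u,v) ∼ N(0, [[K^(h−1)_{ii}, K^(h−1)_{ij}],[K^(h−1)_{ji}, K^(h−1)_{jj}]])`:
`K^(h)_{ij} = K^(h−1)_{ij} + E[ρ^(h)(u) b^(h−1)_j + b^(h−1)_i ρ^(h)(v) + ρ^(h)(u)ρ^(h)(v)]`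
and `b^(h)_i = b^(h−1)_i + E[ρ^(h)(u)]`. -/
def skipKer (ρ : ℕ → ℝ → ℝ) {n : ℕ} (K0 : Matrix (Fin n) (Fin n) ℝ) :
    ℕ → Matrix (Fin n) (Fin n) ℝ × (Fin n → ℝ)
  | 0 => (K0, fun _ => 0)
  | h + 1 =>
      (Matrix.of fun i j =>
        (skipKer ρ K0 h).1 i j +
          gaussExp2 (cov2 (skipKer ρ K0 h).1 i j) fun u v =>
            ρ (h + 1) u * (skipKer ρ K0 h).2 j + (skipKer ρ K0 h).2 i * ρ (h + 1) v +
              ρ (h + 1) u * ρ (h + 1) v,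
       fun i => (skipKer ρ K0 h).2 i + gaussExp1 ((skipKer ρ K0 h).1 i i) (ρ (h + 1)))



section AuxProofs
open Real Set
open scoped ENNReal

lemma aux_pdf_conv (v1 v2 : ℝ≥0) (h1 : v1 ≠ 0) (h2 : v2 ≠ 0) (u : ℝ) :
    ∫ x, gaussianPDFReal 0 v1 x * gaussianPDFReal 0 v2 (u - x)
      = gaussianPDFReal 0 (v1 + v2) u := by
  have ha : (0:ℝ) < v1 := lt_of_le_of_ne v1.coe_nonneg (by exact_mod_cast (Ne.symm h1))
  have hb : (0:ℝ) < v2 := lt_of_le_of_ne v2.coe_nonneg (by exact_mod_cast (Ne.symm h2))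
  set a : ℝ := (v1 : ℝ) with hadef
  set b : ℝ := (v2 : ℝ) with hbdef
  have hV : (0:ℝ) < a + b := by positivity
  have hB : (0:ℝ) < (a + b) / (2 * a * b) := by positivity
  have hpi := Real.pi_pos
  have key : ∀ x : ℝ, gaussianPDFReal 0 v1 x * gaussianPDFReal 0 v2 (u - x)
      = ((√(2*π*a))⁻¹ * (√(2*π*b))⁻¹ * rexp (-u^2/(2*(a+b))))
        * rexp (-((a+b)/(2*a*b)) * (x - a*u/(a+b))^2) := by
    intro x
    have hexp : rexp (-(x-0)^2/(2*a)) * rexp (-((u-x)-0)^2/(2*b))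
        = rexp (-u^2/(2*(a+b))) * rexp (-((a+b)/(2*a*b)) * (x - a*u/(a+b))^2) := by
      rw [← Real.exp_add, ← Real.exp_add]
      congr 1
      field_simp
      ring
    have : gaussianPDFReal 0 v1 x * gaussianPDFReal 0 v2 (u - x)
        = ((√(2*π*a))⁻¹ * (√(2*π*b))⁻¹) * (rexp (-(x-0)^2/(2*a)) * rexp (-((u-x)-0)^2/(2*b))) := by
      simp only [gaussianPDFReal, ← hadef, ← hbdef]
      ring
    rw [this, hexp]; ring
  rw [integral_congr_ae (.of_forall key), integral_const_mul]
  have hshift : ∫ x : ℝ, rexp (-((a+b)/(2*a*b)) * (x - a*u/(a+b))^2)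
      = ∫ x : ℝ, rexp (-((a+b)/(2*a*b)) * x^2) :=
    integral_sub_right_eq_self (fun t => rexp (-((a+b)/(2*a*b)) * t^2)) (a*u/(a+b))
  rw [hshift, integral_gaussian]
  -- now constants
  have hconst : (√(2*π*a))⁻¹ * (√(2*π*b))⁻¹ * √(π / ((a+b)/(2*a*b))) = (√(2*π*(a+b)))⁻¹ := by
    rw [← Real.sqrt_inv, ← Real.sqrt_inv, ← Real.sqrt_inv,
      ← Real.sqrt_mul (by positivity), ← Real.sqrt_mul (by positivity)]
    congr 1
    field_simp
  have : gaussianPDFReal 0 (v1 + v2) u = (√(2*π*(a+b)))⁻¹ * rexp (-u^2/(2*(a+b))) := by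
    simp only [gaussianPDFReal, NNReal.coe_add, ← hadef, ← hbdef, sub_zero]
  rw [this, ← hconst]
  ring


lemma aux_conv_measure (v1 v2 : ℝ≥0) :
    Measure.map (fun p : ℝ × ℝ => p.1 + p.2)
      ((gaussianReal 0 v1).prod (gaussianReal 0 v2)) = gaussianReal 0 (v1 + v2) := by
  have hm : Measurable (fun p : ℝ × ℝ => p.1 + p.2) := measurable_fst.add measurable_snd
  by_cases h1 : v1 = 0
  · subst h1
    rw [gaussianReal_zero_var, Measure.dirac_prod, Measure.map_map hm measurable_prodMk_left]
    simp only [Function.comp_def, zero_add]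
    rw [Measure.map_id']
  by_cases h2 : v2 = 0
  · subst h2
    rw [gaussianReal_zero_var, Measure.prod_dirac, Measure.map_map hm measurable_prodMk_right]
    simp only [Function.comp_def, add_zero]
    rw [Measure.map_id']
  have h12 : v1 + v2 ≠ 0 := by simp [h1]
  -- joint measurability of (x, u) ↦ gaussianPDF x v2 u
  have hjm : Measurable (fun p : ℝ × ℝ => gaussianPDF p.1 v2 p.2) := by
    unfold gaussianPDF gaussianPDFReal
    exact ((((measurable_snd.sub measurable_fst).pow_const 2).neg.div_const _).exp.const_mul
      _).ennreal_ofReal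
  haveI : IsFiniteMeasure (Measure.map (fun p : ℝ × ℝ => p.1 + p.2)
      ((gaussianReal 0 v1).prod (gaussianReal 0 v2))) := by
    constructor
    rw [Measure.map_apply hm MeasurableSet.univ]
    simp
  refine MeasureTheory.Measure.ext_of_Iic _ _ (fun t => ?_)
  rw [Measure.map_apply hm measurableSet_Iic,
    Measure.prod_apply (hm measurableSet_Iic)]
  have hfib : ∀ x : ℝ, (Prod.mk x ⁻¹' ((fun p : ℝ × ℝ => p.1 + p.2) ⁻¹' Iic t))
      = Iic (t - x) := by
    intro x
    ext y
    simp only [mem_preimage, mem_Iic]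
    constructor
    · intro h; linarith
    · intro h; linarith
  simp_rw [hfib]
  have hshift : ∀ x : ℝ, (gaussianReal 0 v2) (Iic (t - x))
      = ∫⁻ u in Iic t, gaussianPDF x v2 u := by
    intro x
    have hmapv : (gaussianReal 0 v2).map (· + x) = gaussianReal x v2 := by
      rw [gaussianReal_map_add_const x, zero_add]
    have : (gaussianReal 0 v2) (Iic (t - x)) = (gaussianReal 0 v2).map (· + x) (Iic t) := by
      rw [Measure.map_apply (measurable_add_const x) measurableSet_Iic]
      congr 1
      ext y
      simp only [mem_preimage, mem_Iic]
      constructor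
      · intro h; linarith
      · intro h; linarith
    rw [this, hmapv, gaussianReal_apply _ h2]
  simp_rw [hshift]
  have hinner : Measurable fun x : ℝ => ∫⁻ u in Iic t, gaussianPDF x v2 u :=
    Measurable.lintegral_prod_right' (f := fun p : ℝ × ℝ => gaussianPDF p.1 v2 p.2) hjm
  rw [gaussianReal_of_var_ne_zero _ h1,
    lintegral_withDensity_eq_lintegral_mul _ (measurable_gaussianPDF _ _) hinner]
  simp only [Pi.mul_apply]
  have hpull : ∀ x : ℝ, gaussianPDF 0 v1 x * ∫⁻ u in Iic t, gaussianPDF x v2 u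
      = ∫⁻ u in Iic t, gaussianPDF 0 v1 x * gaussianPDF x v2 u := by
    intro x
    exact (lintegral_const_mul _ (measurable_gaussianPDF x v2)).symm
  simp_rw [hpull]
  rw [lintegral_lintegral_swap]
  swap
  · exact ((measurable_gaussianPDF 0 v1).comp measurable_fst).mul hjm |>.aemeasurable
  have hpoint : ∀ u : ℝ, (∫⁻ x, gaussianPDF 0 v1 x * gaussianPDF x v2 u ∂(volume : Measure ℝ))
      = gaussianPDF 0 (v1 + v2) u := by
    intro u
    have hre : ∀ x : ℝ, gaussianPDF 0 v1 x * gaussianPDF x v2 u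
        = ENNReal.ofReal (gaussianPDFReal 0 v1 x * gaussianPDFReal 0 v2 (u - x)) := by
      intro x
      rw [gaussianPDF, gaussianPDF, ← ENNReal.ofReal_mul (gaussianPDFReal_nonneg _ _ _)]
      congr 2
      unfold gaussianPDFReal
      rw [sub_zero]
    simp_rw [hre]
    have hIntShift : Integrable (fun x : ℝ => gaussianPDFReal 0 v1 x
        * gaussianPDFReal 0 v2 (u - x)) := by
      have hb : ∀ x : ℝ, ‖gaussianPDFReal 0 v2 (u - x)‖ ≤ (√(2 * π * v2))⁻¹ := by
        intro x
        rw [Real.norm_of_nonneg (gaussianPDFReal_nonneg _ _ _)]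
        unfold gaussianPDFReal
        refine mul_le_of_le_one_right (by positivity) ?_
        refine Real.exp_le_one_iff.mpr ?_
        have : (0:ℝ) ≤ (u - x - 0)^2 := sq_nonneg _
        have hv2 : (0:ℝ) ≤ (v2 : ℝ) := v2.coe_nonneg
        apply div_nonpos_of_nonpos_of_nonneg <;> nlinarith
      have := (integrable_gaussianPDFReal 0 v1).bdd_mul
        (((measurable_gaussianPDFReal 0 v2).comp
          (measurable_const.sub measurable_id)).aestronglyMeasurable)
        (ae_of_all _ hb)
      simpa [mul_comm] using this
    rw [← ofReal_integral_eq_lintegral_ofReal hIntShift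
      (ae_of_all _ fun x => mul_nonneg (gaussianPDFReal_nonneg _ _ _)
        (gaussianPDFReal_nonneg _ _ _)),
      aux_pdf_conv v1 v2 h1 h2 u]
    rfl
  simp_rw [hpoint]
  rw [← gaussianReal_apply 0 h12 (Iic t)]


instance (ι : Type*) [Fintype ι] : IsProbabilityMeasure (stdGaussianPi ι) := by
  unfold stdGaussianPi; infer_instance

lemma aux_map_lin (w : Fin 2 → ℝ) :
    Measure.map (fun z : Fin 2 → ℝ => w 0 * z 0 + w 1 * z 1) (stdGaussianPi (Fin 2))
      = gaussianReal 0 ((w 0 ^ 2 + w 1 ^ 2).toNNReal) := by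
  have e := MeasurableEquiv.piFinTwo (fun _ : Fin 2 => ℝ)
  have hpm : Measure.map (MeasurableEquiv.piFinTwo (fun _ : Fin 2 => ℝ)) (stdGaussianPi (Fin 2))
      = (gaussianReal 0 1).prod (gaussianReal 0 1) :=
    (measurePreserving_piFinTwo (fun _ : Fin 2 => gaussianReal 0 1)).map_eq
  have hcomp : (fun z : Fin 2 → ℝ => w 0 * z 0 + w 1 * z 1)
      = (fun p : ℝ × ℝ => p.1 + p.2) ∘ (Prod.map (fun x => w 0 * x) (fun x => w 1 * x))
        ∘ (MeasurableEquiv.piFinTwo (fun _ : Fin 2 => ℝ)) := by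
    funext z; rfl
  have hpmap : Measurable (Prod.map (fun x : ℝ => w 0 * x) (fun x : ℝ => w 1 * x)) :=
    (measurable_const_mul _).prodMap (measurable_const_mul _)
  rw [hcomp, ← Measure.map_map (g := fun p : ℝ × ℝ => p.1 + p.2) (measurable_fst.add measurable_snd)
      (hpmap.comp (MeasurableEquiv.measurable _)),
    ← Measure.map_map hpmap (MeasurableEquiv.measurable _),
    hpm, ← Measure.map_prod_map _ _ (measurable_const_mul _) (measurable_const_mul _)]
  have hmap0 : Measure.map (fun x : ℝ => w 0 * x) (gaussianReal 0 1)
      = gaussianReal 0 (.mk (w 0 ^ 2) (sq_nonneg _)) := by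
    rw [show (fun x : ℝ => w 0 * x) = (w 0 * ·) from rfl, gaussianReal_map_const_mul]
    norm_num
  have hmap1 : Measure.map (fun x : ℝ => w 1 * x) (gaussianReal 0 1)
      = gaussianReal 0 (.mk (w 1 ^ 2) (sq_nonneg _)) := by
    rw [show (fun x : ℝ => w 1 * x) = (w 1 * ·) from rfl, gaussianReal_map_const_mul]
    norm_num
  rw [hmap0, hmap1, aux_conv_measure]
  congr 1
  ext
  simp [Real.toNNReal, max_eq_left (by positivity : (0:ℝ) ≤ w 0 ^ 2 + w 1 ^ 2)]


lemma aux_gaussExp1_eq {v : ℝ} (hv : 0 ≤ v) {f : ℝ → ℝ} (hf : Continuous f) :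
    gaussExp1 v f = ∫ x, f x ∂(gaussianReal 0 v.toNNReal) := by
  have hmap : Measure.map (fun z : ℝ => Real.sqrt v * z) (gaussianReal 0 1)
      = gaussianReal 0 v.toNNReal := by
    have hnn : (⟨(√v)^2, sq_nonneg _⟩ : ℝ≥0) * 1 = v.toNNReal := by
      rw [mul_one]
      exact NNReal.coe_injective (by simp [Real.sq_sqrt hv, Real.coe_toNNReal _ hv, NNReal.coe_mk]; rfl)
    rw [show (fun z : ℝ => Real.sqrt v * z) = (Real.sqrt v * ·) from rfl,
      gaussianReal_map_const_mul, mul_zero]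
    exact congrArg _ hnn
  rw [gaussExp1, ← hmap, integral_map (measurable_const_mul _).aemeasurable
    hf.aestronglyMeasurable]

/-- integrability of functions with quadratic growth against a 1D Gaussian. -/
lemma aux_integrable_quad {g : ℝ → ℝ} (hg : Continuous g) {a b : ℝ}
    (hbound : ∀ x, |g x| ≤ a + b * x ^ 2) (w : ℝ≥0) :
    Integrable g (gaussianReal 0 w) := by
  by_cases hw : w = 0
  · subst hw
    rw [gaussianReal_zero_var]
    refine ⟨hg.aestronglyMeasurable, ?_⟩
    have : (∫⁻ x, ‖g x‖ₑ ∂(Measure.dirac (0:ℝ))) = ‖g 0‖ₑ :=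
      lintegral_dirac' _ (hg.measurable.enorm)
    rw [HasFiniteIntegral, this]
    exact enorm_lt_top
  rw [gaussianReal_of_var_ne_zero _ hw,
    integrable_withDensity_iff (measurable_gaussianPDF _ _)
      (ae_of_all _ fun x => ENNReal.ofReal_lt_top)]
  have hpos : (0:ℝ) < (w:ℝ) := lt_of_le_of_ne w.coe_nonneg (by exact_mod_cast Ne.symm hw)
  have hBpos : (0:ℝ) < (2 * (w:ℝ))⁻¹ := by positivity
  have hx2 : Integrable (fun x : ℝ => x ^ 2 * rexp (-(2 * (w:ℝ))⁻¹ * x ^ 2)) := by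
    have := integrable_rpow_mul_exp_neg_mul_sq hBpos (s := 2) (by norm_num)
    simpa [Real.rpow_natCast] using this
  have hc : Integrable (fun x : ℝ => rexp (-(2 * (w:ℝ))⁻¹ * x ^ 2)) :=
    integrable_exp_neg_mul_sq hBpos
  have hmaj : Integrable (fun x : ℝ => (a + b * x ^ 2) *
      ((√(2 * π * w))⁻¹ * rexp (-(2 * (w:ℝ))⁻¹ * x ^ 2))) := by
    have : (fun x : ℝ => (a + b * x ^ 2) * ((√(2 * π * w))⁻¹ * rexp (-(2 * (w:ℝ))⁻¹ * x ^ 2)))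
        = fun x => (√(2 * π * w))⁻¹ * (a * rexp (-(2 * (w:ℝ))⁻¹ * x ^ 2)
            + b * (x ^ 2 * rexp (-(2 * (w:ℝ))⁻¹ * x ^ 2))) := by
      funext x; ring
    rw [this]
    exact ((hc.const_mul a).add (hx2.const_mul b)).const_mul _
  refine Integrable.mono' hmaj (hg.aestronglyMeasurable.mul
    (measurable_gaussianPDF 0 w).ennreal_toReal.aestronglyMeasurable)
    (ae_of_all _ fun x => ?_)
  have hpdf : ((gaussianPDF 0 w x).toReal) = gaussianPDFReal 0 w x := by
    rw [gaussianPDF, ENNReal.toReal_ofReal (gaussianPDFReal_nonneg _ _ _)]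
  have hpdfval : gaussianPDFReal 0 w x = (√(2 * π * w))⁻¹ * rexp (-(2 * (w:ℝ))⁻¹ * x ^ 2) := by
    unfold gaussianPDFReal
    rw [sub_zero]
    congr 1
    rw [div_eq_mul_inv, mul_comm, neg_mul]
    ring_nf
  rw [norm_mul, hpdf, hpdfval]
  have h1 : ‖g x‖ ≤ a + b * x ^ 2 := hbound x
  have h2 : (0:ℝ) ≤ (√(2 * π * w))⁻¹ * rexp (-(2 * (w:ℝ))⁻¹ * x ^ 2) := by positivity
  calc ‖g x‖ * ‖(√(2 * π * w))⁻¹ * rexp (-(2 * (w:ℝ))⁻¹ * x ^ 2)‖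
      = ‖g x‖ * ((√(2 * π * w))⁻¹ * rexp (-(2 * (w:ℝ))⁻¹ * x ^ 2)) := by
        rw [Real.norm_of_nonneg h2]
    _ ≤ (a + b * x ^ 2) * ((√(2 * π * w))⁻¹ * rexp (-(2 * (w:ℝ))⁻¹ * x ^ 2)) :=
        mul_le_mul_of_nonneg_right h1 h2


lemma matSqrt_of_psd {A : Matrix (Fin 2) (Fin 2) ℝ} (hA : A.PosSemidef) :
    matSqrt A = (hA.1.eigenvectorUnitary : Matrix (Fin 2) (Fin 2) ℝ) *
      diagonal (fun i => Real.sqrt (hA.1.eigenvalues i)) *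
      (star hA.1.eigenvectorUnitary : Matrix (Fin 2) (Fin 2) ℝ) := dif_pos hA

lemma aux_dot {A : Matrix (Fin 2) (Fin 2) ℝ} (hA : A.PosSemidef) (i j : Fin 2) :
    matSqrt A i 0 * matSqrt A j 0 + matSqrt A i 1 * matSqrt A j 1 = A i j := by
  set U : Matrix (Fin 2) (Fin 2) ℝ := (hA.1.eigenvectorUnitary : Matrix (Fin 2) (Fin 2) ℝ) with hUdef
  set D : Matrix (Fin 2) (Fin 2) ℝ := diagonal (fun i => Real.sqrt (hA.1.eigenvalues i)) with hDdef
  have hU : star U * U = 1 := Unitary.coe_star_mul_self _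
  have hS : matSqrt A = U * D * star U := matSqrt_of_psd hA
  have hsym : (matSqrt A).IsHermitian := by
    unfold IsHermitian
    rw [hS, hDdef]
    simp [Matrix.mul_assoc, star_eq_conjTranspose, conjTranspose_mul]
  have hmul : matSqrt A * matSqrt A = A := by
    rw [hS]
    conv_rhs => rw [hA.1.spectral_theorem, Unitary.conjStarAlgAut_apply]
    have hD : D * D = Matrix.diagonal (RCLike.ofReal ∘ hA.1.eigenvalues) := by
      rw [hDdef, diagonal_mul_diagonal]
      congr 1
      funext k
      simp [Real.mul_self_sqrt (hA.eigenvalues_nonneg k)]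
    calc U * D * star U * (U * D * star U) = U * D * (star U * U) * D * star U := by
          simp only [Matrix.mul_assoc]
      _ = _ := by rw [hU, Matrix.mul_one, Matrix.mul_assoc U D D, hD]
  have h := congrFun (congrFun hmul i) j
  rw [Matrix.mul_apply, Fin.sum_univ_two] at h
  have e0 : matSqrt A 0 j = matSqrt A j 0 := by
    have h' := hsym.apply 0 j; rw [star_trivial] at h'; exact h'.symm
  have e1 : matSqrt A 1 j = matSqrt A j 1 := by
    have h' := hsym.apply 1 j; rw [star_trivial] at h'; exact h'.symm
  rw [e0, e1] at h
  exact h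

lemma aux_mulVec (M : Matrix (Fin 2) (Fin 2) ℝ) (z : Fin 2 → ℝ) (k : Fin 2) :
    M.mulVec z k = M k 0 * z 0 + M k 1 * z 1 := by
  simp [Matrix.mulVec, dotProduct, Fin.sum_univ_two]

lemma aux_diag_nonneg {A : Matrix (Fin 2) (Fin 2) ℝ} (hA : A.PosSemidef) (k : Fin 2) :
    0 ≤ A k k := by
  have h := aux_dot hA k k
  nlinarith [mul_self_nonneg (matSqrt A k 0), mul_self_nonneg (matSqrt A k 1)]

lemma aux_meas_u (A : Matrix (Fin 2) (Fin 2) ℝ) (k : Fin 2) :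
    Measurable (fun z : Fin 2 → ℝ => (matSqrt A).mulVec z k) := by
  have : (fun z : Fin 2 → ℝ => (matSqrt A).mulVec z k)
      = fun z => matSqrt A k 0 * z 0 + matSqrt A k 1 * z 1 :=
    funext fun z => aux_mulVec _ z k
  rw [this]
  exact ((measurable_pi_apply 0).const_mul _).add ((measurable_pi_apply 1).const_mul _)

lemma aux_law {A : Matrix (Fin 2) (Fin 2) ℝ} (hA : A.PosSemidef) (k : Fin 2) :
    Measure.map (fun z : Fin 2 → ℝ => (matSqrt A).mulVec z k) (stdGaussianPi (Fin 2))
      = gaussianReal 0 ((A k k).toNNReal) := by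
  have h1 : (fun z : Fin 2 → ℝ => (matSqrt A).mulVec z k)
      = fun z => (fun l => matSqrt A k l) 0 * z 0 + (fun l => matSqrt A k l) 1 * z 1 :=
    funext fun z => aux_mulVec _ z k
  rw [h1, aux_map_lin (fun l => matSqrt A k l)]
  congr 2
  have := aux_dot hA k k
  nlinarith [this]

lemma aux_transfer {A : Matrix (Fin 2) (Fin 2) ℝ} (hA : A.PosSemidef) (k : Fin 2)
    {f : ℝ → ℝ} (hf : Continuous f) :
    ∫ z, f ((matSqrt A).mulVec z k) ∂(stdGaussianPi (Fin 2))
      = ∫ x, f x ∂(gaussianReal 0 ((A k k).toNNReal)) := by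
  rw [← aux_law hA k, integral_map (aux_meas_u A k).aemeasurable hf.aestronglyMeasurable]

lemma aux_int_comp {A : Matrix (Fin 2) (Fin 2) ℝ} (hA : A.PosSemidef) (k : Fin 2)
    {f : ℝ → ℝ} (hf : Continuous f)
    (hint : Integrable f (gaussianReal 0 ((A k k).toNNReal))) :
    Integrable (fun z => f ((matSqrt A).mulVec z k)) (stdGaussianPi (Fin 2)) := by
  rw [← aux_law hA k] at hint
  exact (integrable_map_measure hf.aestronglyMeasurable
    (aux_meas_u A k).aemeasurable).mp hint

section Lip
variable {L : ℝ≥0} {ρ : ℝ → ℝ} (hρ : LipschitzWith L ρ)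

include hρ

lemma lip_abs (x : ℝ) : |ρ x| ≤ |ρ 0| + L * |x| := by
  have h := hρ.dist_le_mul x 0
  rw [Real.dist_eq, Real.dist_eq, sub_zero] at h
  have := abs_sub_abs_le_abs_sub (ρ x) (ρ 0)
  linarith

lemma lip_bound1 (x : ℝ) : |ρ x| ≤ (|ρ 0| + L) + L * x ^ 2 := by
  have h1 := lip_abs hρ x
  have h2 : |x| ≤ 1 + x ^ 2 := by nlinarith [sq_nonneg (|x| - 1), sq_abs x, abs_nonneg x]
  nlinarith [L.coe_nonneg]

lemma lip_bound2 (x : ℝ) :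
    |ρ x ^ 2| ≤ (ρ 0 ^ 2 + |ρ 0| * L) + (|ρ 0| * L + L ^ 2) * x ^ 2 := by
  have h1 := lip_abs hρ x
  have h2 : 2 * |x| ≤ 1 + x ^ 2 := by nlinarith [sq_nonneg (|x| - 1), sq_abs x]
  have h3 : |ρ x ^ 2| = |ρ x| ^ 2 := by rw [sq_abs, abs_of_nonneg (sq_nonneg _)]
  have h4 : |ρ x| ^ 2 ≤ (|ρ 0| + L * |x|) ^ 2 := pow_le_pow_left₀ (abs_nonneg _) h1 2
  have h5 : |ρ 0| * L * (2 * |x|) ≤ |ρ 0| * L * (1 + x ^ 2) :=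
    mul_le_mul_of_nonneg_left h2 (by positivity)
  have expand : (|ρ 0| + (L : ℝ) * |x|) ^ 2
      = |ρ 0| ^ 2 + |ρ 0| * (L : ℝ) * (2 * |x|) + (L : ℝ) ^ 2 * |x| ^ 2 := by ring
  rw [h3]
  calc |ρ x| ^ 2 ≤ (|ρ 0| + (L : ℝ) * |x|) ^ 2 := h4
    _ = |ρ 0| ^ 2 + |ρ 0| * (L : ℝ) * (2 * |x|) + (L : ℝ) ^ 2 * |x| ^ 2 := expand
    _ ≤ |ρ 0| ^ 2 + |ρ 0| * (L : ℝ) * (1 + x ^ 2) + (L : ℝ) ^ 2 * x ^ 2 := by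
        rw [sq_abs x]; linarith
    _ = (ρ 0 ^ 2 + |ρ 0| * (L : ℝ)) + (|ρ 0| * (L : ℝ) + (L : ℝ) ^ 2) * x ^ 2 := by
        rw [sq_abs]; ring

lemma int_rho (w : ℝ≥0) : Integrable ρ (gaussianReal 0 w) :=
  aux_integrable_quad hρ.continuous (lip_bound1 hρ) w

lemma int_rho_sq (w : ℝ≥0) : Integrable (fun x => ρ x ^ 2) (gaussianReal 0 w) :=
  aux_integrable_quad (hρ.continuous.pow 2) (lip_bound2 hρ) w

variable {A : Matrix (Fin 2) (Fin 2) ℝ} (hA : A.PosSemidef)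
include hA

lemma int_u (k : Fin 2) :
    Integrable (fun z => ρ ((matSqrt A).mulVec z k)) (stdGaussianPi (Fin 2)) :=
  aux_int_comp hA k hρ.continuous (int_rho hρ _)

lemma int_u_sq (k : Fin 2) :
    Integrable (fun z => ρ ((matSqrt A).mulVec z k) ^ 2) (stdGaussianPi (Fin 2)) :=
  aux_int_comp hA k (hρ.continuous.pow 2) (int_rho_sq hρ _)

lemma int_uv :
    Integrable (fun z => ρ ((matSqrt A).mulVec z 0) * ρ ((matSqrt A).mulVec z 1))
      (stdGaussianPi (Fin 2)) := by
  refine Integrable.mono' (((int_u_sq hρ hA 0).const_mul (1/2)).add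
    ((int_u_sq hρ hA 1).const_mul (1/2))) ?_ (ae_of_all _ fun z => ?_)
  · exact ((hρ.continuous.measurable.comp (aux_meas_u A 0)).mul
      (hρ.continuous.measurable.comp (aux_meas_u A 1))).aestronglyMeasurable
  · have := abs_mul (ρ ((matSqrt A).mulVec z 0)) (ρ ((matSqrt A).mulVec z 1))
    rw [Real.norm_eq_abs, this]
    simp only [Pi.add_apply]
    nlinarith [sq_nonneg (|ρ ((matSqrt A).mulVec z 0)| - |ρ ((matSqrt A).mulVec z 1)|),
      sq_abs (ρ ((matSqrt A).mulVec z 0)), sq_abs (ρ ((matSqrt A).mulVec z 1)),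
      abs_nonneg (ρ ((matSqrt A).mulVec z 0)), abs_nonneg (ρ ((matSqrt A).mulVec z 1))]

lemma exp_u_val (k : Fin 2) :
    ∫ z, ρ ((matSqrt A).mulVec z k) ∂(stdGaussianPi (Fin 2)) = gaussExp1 (A k k) ρ := by
  rw [aux_transfer hA k hρ.continuous, aux_gaussExp1_eq (aux_diag_nonneg hA k) hρ.continuous]

lemma exp_u_sq_val (k : Fin 2) :
    ∫ z, ρ ((matSqrt A).mulVec z k) ^ 2 ∂(stdGaussianPi (Fin 2))
      = gaussExp1 (A k k) (fun x => ρ x ^ 2) := by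
  rw [aux_transfer hA k (f := fun x => ρ x ^ 2) (hρ.continuous.pow 2),
    aux_gaussExp1_eq (aux_diag_nonneg hA k) (f := fun x => ρ x ^ 2) (hρ.continuous.pow 2)]

/-- Cauchy–Schwarz / Jensen step. -/
lemma aux_CS (a c : ℝ) :
    (a * gaussExp1 (A 0 0) ρ + c * gaussExp1 (A 1 1) ρ) ^ 2
      ≤ a ^ 2 * gaussExp1 (A 0 0) (fun x => ρ x ^ 2)
        + 2 * (a * c) * gaussExp2 A (fun x y => ρ x * ρ y)
        + c ^ 2 * gaussExp1 (A 1 1) (fun x => ρ x ^ 2) := by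
  classical
  set μ := stdGaussianPi (Fin 2)
  set u : (Fin 2 → ℝ) → ℝ := fun z => (matSqrt A).mulVec z 0 with hu
  set v : (Fin 2 → ℝ) → ℝ := fun z => (matSqrt A).mulVec z 1 with hv
  set g : (Fin 2 → ℝ) → ℝ := fun z => a * ρ (u z) + c * ρ (v z) with hg
  have Iu := int_u hρ hA 0
  have Iv := int_u hρ hA 1
  have Iu2 := int_u_sq hρ hA 0
  have Iv2 := int_u_sq hρ hA 1
  have Iuv := int_uv hρ hA
  have Ig : Integrable g μ := (Iu.const_mul a).add (Iv.const_mul c)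
  have hg2eq : (fun z => g z ^ 2) = fun z =>
      a ^ 2 * ρ (u z) ^ 2 + 2 * (a * c) * (ρ (u z) * ρ (v z)) + c ^ 2 * ρ (v z) ^ 2 := by
    funext z; simp only [hg]; ring
  have Ia2 : Integrable (fun z => a ^ 2 * ρ (u z) ^ 2) μ := Iu2.const_mul _
  have Iac : Integrable (fun z => 2 * (a * c) * (ρ (u z) * ρ (v z))) μ := Iuv.const_mul _
  have Ic2 : Integrable (fun z => c ^ 2 * ρ (v z) ^ 2) μ := Iv2.const_mul _
  have I12 : Integrable (fun z => a ^ 2 * ρ (u z) ^ 2 + 2 * (a * c) * (ρ (u z) * ρ (v z))) μ :=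
    Ia2.add Iac
  have Ig2 : Integrable (fun z => g z ^ 2) μ := by
    rw [hg2eq]
    exact I12.add Ic2
  have hmem : MemLp g 2 μ := (memLp_two_iff_integrable_sq Ig.aestronglyMeasurable).mpr Ig2
  have hvar := variance_nonneg g μ
  rw [variance_eq_sub hmem] at hvar
  have Iua : Integrable (fun z => a * ρ (u z)) μ := Iu.const_mul a
  have Ivc : Integrable (fun z => c * ρ (v z)) μ := Iv.const_mul c
  have hEg : ∫ z, g z ∂μ = a * gaussExp1 (A 0 0) ρ + c * gaussExp1 (A 1 1) ρ := by
    simp only [hg]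
    rw [integral_add Iua Ivc, integral_const_mul, integral_const_mul,
      exp_u_val hρ hA 0, exp_u_val hρ hA 1]
  have hEg2 : ∫ z, g z ^ 2 ∂μ
      = a ^ 2 * gaussExp1 (A 0 0) (fun x => ρ x ^ 2)
        + 2 * (a * c) * gaussExp2 A (fun x y => ρ x * ρ y)
        + c ^ 2 * gaussExp1 (A 1 1) (fun x => ρ x ^ 2) := by
    rw [hg2eq, integral_add I12 Ic2, integral_add Ia2 Iac, integral_const_mul, integral_const_mul,
      integral_const_mul, exp_u_sq_val hρ hA 0, exp_u_sq_val hρ hA 1]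
    rfl
  have h1 : μ[g ^ 2] = ∫ z, g z ^ 2 ∂μ := by
    congr 1
  have h2 : μ[g] = ∫ z, g z ∂μ := rfl
  rw [h1, h2, hEg, hEg2] at hvar
  linarith

lemma aux_lin (α β : ℝ) :
    gaussExp2 A (fun x y => ρ x * α + β * ρ y + ρ x * ρ y)
      = α * gaussExp1 (A 0 0) ρ + β * gaussExp1 (A 1 1) ρ
        + gaussExp2 A (fun x y => ρ x * ρ y) := by
  have Iu := int_u hρ hA 0
  have Iv := int_u hρ hA 1
  have Iuv := int_uv hρ hA
  have : gaussExp2 A (fun x y => ρ x * α + β * ρ y + ρ x * ρ y)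
      = ∫ z, (ρ ((matSqrt A).mulVec z 0) * α + β * ρ ((matSqrt A).mulVec z 1)
          + ρ ((matSqrt A).mulVec z 0) * ρ ((matSqrt A).mulVec z 1)) ∂(stdGaussianPi (Fin 2)) :=
    rfl
  have I1 : Integrable (fun z => ρ ((matSqrt A).mulVec z 0) * α) (stdGaussianPi (Fin 2)) :=
    Iu.mul_const α
  have I2 : Integrable (fun z => β * ρ ((matSqrt A).mulVec z 1)) (stdGaussianPi (Fin 2)) :=
    Iv.const_mul β
  have I12 : Integrable (fun z => ρ ((matSqrt A).mulVec z 0) * α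
      + β * ρ ((matSqrt A).mulVec z 1)) (stdGaussianPi (Fin 2)) := I1.add I2
  rw [this, integral_add I12 Iuv, integral_add I1 I2, integral_mul_const, integral_const_mul,
    exp_u_val hρ hA 0, exp_u_val hρ hA 1]
  have : gaussExp2 A (fun x y => ρ x * ρ y) = ∫ z, ρ ((matSqrt A).mulVec z 0)
      * ρ ((matSqrt A).mulVec z 1) ∂(stdGaussianPi (Fin 2)) := rfl
  rw [this]
  ring

end Lip

lemma aux_diag {L : ℝ≥0} {ρ : ℝ → ℝ} (hρ : LipschitzWith L ρ) (k : ℝ)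
    (hA : (!![k, k; k, k] : Matrix (Fin 2) (Fin 2) ℝ).PosSemidef) :
    gaussExp2 !![k, k; k, k] (fun x y => ρ x * ρ y) = gaussExp1 k (fun x => ρ x ^ 2) := by
  set S := matSqrt (!![k, k; k, k] : Matrix (Fin 2) (Fin 2) ℝ) with hS
  have h00 := aux_dot hA 0 0
  have h01 := aux_dot hA 0 1
  have h11 := aux_dot hA 1 1
  rw [← hS] at h00 h01 h11
  have g00 : S 0 0 * S 0 0 + S 0 1 * S 0 1 = k := h00
  have g01 : S 0 0 * S 1 0 + S 0 1 * S 1 1 = k := h01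
  have g11 : S 1 0 * S 1 0 + S 1 1 * S 1 1 = k := h11
  have e0 : S 0 0 = S 1 0 := by
    nlinarith [sq_nonneg (S 0 0 - S 1 0), sq_nonneg (S 0 1 - S 1 1)]
  have e1 : S 0 1 = S 1 1 := by
    nlinarith [sq_nonneg (S 0 0 - S 1 0), sq_nonneg (S 0 1 - S 1 1)]
  have huv : ∀ z : Fin 2 → ℝ, S.mulVec z 0 = S.mulVec z 1 := by
    intro z
    rw [aux_mulVec, aux_mulVec, e0, e1]
  have : gaussExp2 !![k, k; k, k] (fun x y => ρ x * ρ y)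
      = ∫ z, ρ (S.mulVec z 0) ^ 2 ∂(stdGaussianPi (Fin 2)) := by
    refine integral_congr_ae (ae_of_all _ fun z => ?_)
    show ρ (S.mulVec z 0) * ρ (S.mulVec z 1) = _
    rw [← huv z]; ring
  rw [this, aux_transfer hA 0 (f := fun x => ρ x ^ 2) (hρ.continuous.pow 2)]
  have hkk : (!![k, k; k, k] : Matrix (Fin 2) (Fin 2) ℝ) 0 0 = k := rfl
  rw [hkk, ← aux_gaussExp1_eq (by rw [← hkk]; exact aux_diag_nonneg hA 0) (f := fun x => ρ x ^ 2) (hρ.continuous.pow 2)]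

/-- The main per-step inequality. -/
lemma aux_step {L : ℝ≥0} {ρ : ℝ → ℝ} (hρ : LipschitzWith L ρ) {n : ℕ}
    (K : Matrix (Fin n) (Fin n) ℝ) (b : Fin n → ℝ)
    (hpsd : ∀ i j, (cov2 K i j).PosSemidef) (i j : Fin n) (a c : ℝ) :
    (a ^ 2 * K i i + a * c * K i j + a * c * K j i + c ^ 2 * K j j)
      - (a * b i + c * b j) ^ 2
    ≤ (a ^ 2 * (K i i + gaussExp2 (cov2 K i i) (fun x y => ρ x * b i + b i * ρ y + ρ x * ρ y))
       + a * c * (K i j + gaussExp2 (cov2 K i j) (fun x y => ρ x * b j + b i * ρ y + ρ x * ρ y))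
       + a * c * (K j i + gaussExp2 (cov2 K j i) (fun x y => ρ x * b i + b j * ρ y + ρ x * ρ y))
       + c ^ 2 * (K j j + gaussExp2 (cov2 K j j) (fun x y => ρ x * b j + b j * ρ y + ρ x * ρ y)))
      - (a * (b i + gaussExp1 (K i i) ρ) + c * (b j + gaussExp1 (K j j) ρ)) ^ 2 := by
  have d1 : gaussExp2 (cov2 K i i) (fun x y => ρ x * ρ y)
      = gaussExp1 (K i i) (fun x => ρ x ^ 2) := aux_diag hρ (K i i) (hpsd i i)
  have d2 : gaussExp2 (cov2 K j j) (fun x y => ρ x * ρ y)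
      = gaussExp1 (K j j) (fun x => ρ x ^ 2) := aux_diag hρ (K j j) (hpsd j j)
  rw [aux_lin hρ (hpsd i i) (b i) (b i), aux_lin hρ (hpsd i j) (b j) (b i),
    aux_lin hρ (hpsd j i) (b i) (b j), aux_lin hρ (hpsd j j) (b j) (b j), d1, d2]
  have CS1 := aux_CS hρ (hpsd i j) a c
  have CS2 := aux_CS hρ (hpsd j i) c a
  -- identify the matrix entries (all definitional)
  have rii0 : gaussExp1 ((cov2 K i i) 0 0) ρ = gaussExp1 (K i i) ρ := rfl
  have rii1 : gaussExp1 ((cov2 K i i) 1 1) ρ = gaussExp1 (K i i) ρ := rfl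
  have rij0 : gaussExp1 ((cov2 K i j) 0 0) ρ = gaussExp1 (K i i) ρ := rfl
  have rij1 : gaussExp1 ((cov2 K i j) 1 1) ρ = gaussExp1 (K j j) ρ := rfl
  have rji0 : gaussExp1 ((cov2 K j i) 0 0) ρ = gaussExp1 (K j j) ρ := rfl
  have rji1 : gaussExp1 ((cov2 K j i) 1 1) ρ = gaussExp1 (K i i) ρ := rfl
  have rjj0 : gaussExp1 ((cov2 K j j) 0 0) ρ = gaussExp1 (K j j) ρ := rfl
  have rjj1 : gaussExp1 ((cov2 K j j) 1 1) ρ = gaussExp1 (K j j) ρ := rfl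
  have sij0 : gaussExp1 ((cov2 K i j) 0 0) (fun x => ρ x ^ 2)
      = gaussExp1 (K i i) (fun x => ρ x ^ 2) := rfl
  have sij1 : gaussExp1 ((cov2 K i j) 1 1) (fun x => ρ x ^ 2)
      = gaussExp1 (K j j) (fun x => ρ x ^ 2) := rfl
  have sji0 : gaussExp1 ((cov2 K j i) 0 0) (fun x => ρ x ^ 2)
      = gaussExp1 (K j j) (fun x => ρ x ^ 2) := rfl
  have sji1 : gaussExp1 ((cov2 K j i) 1 1) (fun x => ρ x ^ 2)
      = gaussExp1 (K i i) (fun x => ρ x ^ 2) := rfl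
  rw [rij0, rij1, sij0, sij1] at CS1
  rw [rji0, rji1, sji0, sji1] at CS2
  rw [rii0, rii1, rij0, rij1, rji0, rji1, rjj0, rjj1]
  nlinarith [CS1, CS2]


lemma aux_chain (ρ : ℕ → ℝ → ℝ) {n : ℕ} (K0 : Matrix (Fin n) (Fin n) ℝ)
    (hlip : ∀ h, ∃ L : ℝ≥0, LipschitzWith L (ρ h))
    (hpsd : ∀ (h : ℕ) (i j : Fin n), (cov2 (skipKer ρ K0 h).1 i j).PosSemidef)
    (H : ℕ) (i j : Fin n) (a c : ℝ) :
    a ^ 2 * K0 i i + a * c * K0 i j + a * c * K0 j i + c ^ 2 * K0 j j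
      ≤ (a ^ 2 * (skipKer ρ K0 H).1 i i + a * c * (skipKer ρ K0 H).1 i j
          + a * c * (skipKer ρ K0 H).1 j i + c ^ 2 * (skipKer ρ K0 H).1 j j)
        - (a * (skipKer ρ K0 H).2 i + c * (skipKer ρ K0 H).2 j) ^ 2 := by
  induction H with
  | zero => simp [skipKer]
  | succ h ih =>
      obtain ⟨L, hL⟩ := hlip (h + 1)
      have step := aux_step hL (skipKer ρ K0 h).1 (skipKer ρ K0 h).2 (hpsd h) i j a c
      exact ih.trans (step.trans_eq rfl)

lemma cov2_00 {n : ℕ} (M : Matrix (Fin n) (Fin n) ℝ) (p q : Fin n) :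
    cov2 M p q 0 0 = M p p := rfl
lemma cov2_01 {n : ℕ} (M : Matrix (Fin n) (Fin n) ℝ) (p q : Fin n) :
    cov2 M p q 0 1 = M p q := rfl
lemma cov2_10 {n : ℕ} (M : Matrix (Fin n) (Fin n) ℝ) (p q : Fin n) :
    cov2 M p q 1 0 = M q p := rfl
lemma cov2_11 {n : ℕ} (M : Matrix (Fin n) (Fin n) ℝ) (p q : Fin n) :
    cov2 M p q 1 1 = M q q := rfl

lemma aux_lambdaMin_mono (M N : Matrix (Fin 2) (Fin 2) ℝ)
    (h : ∀ v : Fin 2 → ℝ, (∑ i, v i ^ 2) = 1 →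
      (∑ i, ∑ j, v i * M i j * v j) ≤ ∑ i, ∑ j, v i * N i j * v j) :
    lambdaMin M ≤ lambdaMin N := by
  have habs : ∀ (v : Fin 2 → ℝ), (∑ i, v i ^ 2) = 1 → ∀ i, |v i| ≤ 1 := by
    intro v hv i
    have h1 : v i ^ 2 ≤ 1 := by
      rw [← hv]
      exact Finset.single_le_sum (f := fun i => v i ^ 2) (fun _ _ => sq_nonneg _)
        (Finset.mem_univ i)
    nlinarith [abs_nonneg (v i), sq_abs (v i)]
  have hbdd : BddBelow {r | ∃ v : Fin 2 → ℝ, (∑ i, v i ^ 2) = 1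
      ∧ r = ∑ i, ∑ j, v i * M i j * v j} := by
    refine ⟨-(∑ i, ∑ j, |M i j|), ?_⟩
    rintro r ⟨v, hv, rfl⟩
    have hterm : ∀ i j : Fin 2, -|M i j| ≤ v i * M i j * v j := by
      intro i j
      have h1 := habs v hv i
      have h2 := habs v hv j
      have h3 : |v i * M i j * v j| ≤ |M i j| := by
        rw [abs_mul, abs_mul]
        calc |v i| * |M i j| * |v j| ≤ 1 * |M i j| * |v j| :=
              mul_le_mul_of_nonneg_right (mul_le_mul_of_nonneg_right h1 (abs_nonneg _))
                (abs_nonneg _)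
          _ = |M i j| * |v j| := by ring
          _ ≤ |M i j| * 1 := mul_le_mul_of_nonneg_left h2 (abs_nonneg _)
          _ = |M i j| := mul_one _
      linarith [neg_abs_le (v i * M i j * v j), abs_le.mp h3]
    calc -(∑ i, ∑ j, |M i j|) = ∑ i : Fin 2, ∑ j : Fin 2, -|M i j| := by
          simp only [Fin.sum_univ_two]
          ring
      _ ≤ ∑ i, ∑ j, v i * M i j * v j :=
          Finset.sum_le_sum fun i _ => Finset.sum_le_sum fun j _ => hterm i j
  have hvone : (∑ i : Fin 2, (fun l : Fin 2 => if l = 0 then (1:ℝ) else 0) i ^ 2) = 1 := by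
    simp [Fin.sum_univ_two]
  refine le_csInf ⟨_, ⟨_, hvone, rfl⟩⟩ ?_
  rintro r ⟨v, hv, rfl⟩
  exact (csInf_le hbdd ⟨v, hv, rfl⟩).trans (h v hv)


end AuxProofs

/-- **Lemma E.5**: for the identity-skip-connection kernel recursion with Lipschitz
activations `ρ^(h)` and positive semidefinite `2×2` covariance blocks at every level,
the minimum over pairs `(i,j)` of the least eigenvalue of the `2×2` block of `K^(H)`
is at least the corresponding quantity for `K^(0)`. -/
theorem skip_connection_kernel_least_eigenvalue_monotone
    (n : ℕ) (K0 : Matrix (Fin n) (Fin n) ℝ) (ρ : ℕ → ℝ → ℝ)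
    (hlip : ∀ h, ∃ L : ℝ≥0, LipschitzWith L (ρ h))
    (hpsd : ∀ (h : ℕ) (i j : Fin n), (cov2 (skipKer ρ K0 h).1 i j).PosSemidef)
    (H : ℕ) :
    (⨅ i : Fin n, ⨅ j : Fin n, lambdaMin (cov2 K0 i j)) ≤
      ⨅ i : Fin n, ⨅ j : Fin n, lambdaMin (cov2 (skipKer ρ K0 H).1 i j) := by
  rcases Nat.eq_zero_or_pos n with hn | hn
  · subst hn
    rw [iInf, iInf, Set.range_eq_empty, Set.range_eq_empty, Real.sInf_empty]
  · haveI : Nonempty (Fin n) := Fin.pos_iff_nonempty.mp hn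
    refine le_ciInf fun i => le_ciInf fun j => ?_
    have h1 : (⨅ i : Fin n, ⨅ j : Fin n, lambdaMin (cov2 K0 i j))
        ≤ lambdaMin (cov2 K0 i j) :=
      (ciInf_le (Set.finite_range _).bddBelow i).trans
        ((ciInf_le (Set.finite_range _).bddBelow j))
    refine h1.trans (aux_lambdaMin_mono _ _ fun v hv => ?_)
    have hc := aux_chain ρ K0 hlip hpsd H i j (v 0) (v 1)
    have hsq := sq_nonneg (v 0 * (skipKer ρ K0 H).2 i + v 1 * (skipKer ρ K0 H).2 j)
    simp only [Fin.sum_univ_two, cov2_00, cov2_01, cov2_10, cov2_11]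
    nlinarith [hc, hsq]


end
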